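/- arXiv:2210.11437 — 2 statements merged into one kernel-verified Lean document; each statement's English description precedes it below -/
import Mathlib

section
/- Let s > 1. There exists a constant C > 0 such that for every N > 0, t ≥ 0 and every Schwartz function f on ℝ², ∫_{ℝ²} e^{−N t ξ₁²/|ξ|²} |f(ξ)| dξ ≤ C (1+Nt)^{−1/4} ‖f‖_{H^s(ℝ²)}. -/
open MeasureTheory Real

lemma aux_null : volume {p : ℝ × ℝ | p.2 = 0} = 0 := by
  have h : {p : ℝ × ℝ | p.2 = 0} = (Set.univ : Set ℝ) ×ˢ ({0} : Set ℝ) := by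
    ext ⟨x, y⟩; simp [Set.mem_prod, eq_comm]
  rw [h, Measure.volume_eq_prod, Measure.prod_prod]
  simp

lemma aux_norm (ξ : EuclideanSpace ℝ (Fin 2)) : ‖ξ‖ ^ 2 = (ξ 0) ^ 2 + (ξ 1) ^ 2 := by
  rw [EuclideanSpace.norm_eq, Real.sq_sqrt (by positivity)]
  simp [Fin.sum_univ_two, sq_abs]

lemma aux_int_E2 {s : ℝ} (hs : 1 < s) :
    Integrable (fun ξ : EuclideanSpace ℝ (Fin 2) => (1 + ‖ξ‖ ^ 2) ^ (-s)) := by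
  have h := integrable_rpow_neg_one_add_norm_sq (E := EuclideanSpace ℝ (Fin 2))
    (μ := volume) (r := 2 * s) (by simp [finrank_euclideanSpace]; linarith)
  convert h using 2 with ξ
  ring_nf

lemma aux_int_R {s : ℝ} (hs : 1 < s) :
    Integrable (fun y : ℝ => (1 + y ^ 2) ^ (-(2 * s - 1) / 2)) := by
  have h := integrable_rpow_neg_one_add_norm_sq (E := ℝ)
    (μ := volume) (r := 2 * s - 1) (by simp; linarith)
  simpa [Real.norm_eq_abs, sq_abs] using h

set_option maxHeartbeats 1000000 in
lemma lemmaA (s : ℝ) (hs : 1 < s) :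
    ∃ C > 0, ∀ lam : ℝ, 0 ≤ lam →
      (∫ ξ : EuclideanSpace ℝ (Fin 2),
        Real.exp (-(lam * (ξ 0) ^ 2) / ‖ξ‖ ^ 2) * (1 + ‖ξ‖ ^ 2) ^ (-s)) ≤
      C * (1 + lam) ^ (-(1 / 2) : ℝ) := by
  have hI0int := aux_int_E2 hs
  have hcRint := aux_int_R hs
  set I0 : ℝ := ∫ ξ : EuclideanSpace ℝ (Fin 2), (1 + ‖ξ‖ ^ 2) ^ (-s) with hI0def
  set cR : ℝ := ∫ y : ℝ, (1 + y ^ 2) ^ (-(2 * s - 1) / 2) with hcRdef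
  have hI0 : 0 ≤ I0 := integral_nonneg fun _ => rpow_nonneg (by positivity) _
  have hcR : 0 ≤ cR := integral_nonneg fun _ => rpow_nonneg (by positivity) _
  refine ⟨2 ^ ((1:ℝ)/2) * I0 + 2 * I0 + 2 ^ ((1:ℝ)/2) * Real.sqrt (2 * π) * cR + 1,
    by positivity, ?_⟩
  intro lam hlam
  have h1lam : (0:ℝ) < 1 + lam := by linarith
  have hpowpos : (0:ℝ) < (1 + lam) ^ (-(1 / 2) : ℝ) := rpow_pos_of_pos h1lam _
  -- the function on ℝ × ℝ
  set F : ℝ × ℝ → ENNReal := fun p =>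
    ENNReal.ofReal (Real.exp (-(lam * p.1 ^ 2) / (p.1 ^ 2 + p.2 ^ 2)) *
      (1 + (p.1 ^ 2 + p.2 ^ 2)) ^ (-s)) with hFdef
  have hFmeas : Measurable F := by fun_prop
  have mp := (volume_preserving_finTwoArrow ℝ).comp
    (EuclideanSpace.volume_preserving_symm_measurableEquiv_toLp (Fin 2))
  -- transfer
  have hmeasE2 : Measurable (fun ξ : EuclideanSpace ℝ (Fin 2) =>
      Real.exp (-(lam * (ξ 0) ^ 2) / ‖ξ‖ ^ 2) * (1 + ‖ξ‖ ^ 2) ^ (-s)) := by fun_prop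
  have hnnE2 : ∀ ξ : EuclideanSpace ℝ (Fin 2),
      0 ≤ Real.exp (-(lam * (ξ 0) ^ 2) / ‖ξ‖ ^ 2) * (1 + ‖ξ‖ ^ 2) ^ (-s) :=
    fun ξ => mul_nonneg (exp_nonneg _) (rpow_nonneg (by positivity) _)
  have h1 : (∫ ξ : EuclideanSpace ℝ (Fin 2),
      Real.exp (-(lam * (ξ 0) ^ 2) / ‖ξ‖ ^ 2) * (1 + ‖ξ‖ ^ 2) ^ (-s)) =
      (∫⁻ p : ℝ × ℝ, F p).toReal := by
    rw [integral_eq_lintegral_of_nonneg_ae (Filter.Eventually.of_forall hnnE2)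
      hmeasE2.aestronglyMeasurable]
    congr 1
    rw [← mp.lintegral_comp hFmeas]
    exact lintegral_congr fun ξ => by
      show ENNReal.ofReal _ = F (ξ 0, ξ 1)
      rw [hFdef]
      simp only
      rw [aux_norm ξ]
  have hW : (∫⁻ p : ℝ × ℝ, ENNReal.ofReal ((1 + (p.1 ^ 2 + p.2 ^ 2)) ^ (-s)))
      = ENNReal.ofReal I0 := by
    rw [hI0def, ofReal_integral_eq_lintegral_ofReal hI0int
      (Filter.Eventually.of_forall fun ξ => rpow_nonneg (by positivity) _)]
    have hGmeas : Measurable (fun p : ℝ × ℝ =>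
        ENNReal.ofReal ((1 + (p.1 ^ 2 + p.2 ^ 2)) ^ (-s))) := by fun_prop
    rw [← mp.lintegral_comp hGmeas]
    exact (lintegral_congr fun ξ => by
      show ENNReal.ofReal ((1 + ‖ξ‖ ^ 2) ^ (-s)) =
        ENNReal.ofReal ((1 + ((ξ 0) ^ 2 + (ξ 1) ^ 2)) ^ (-s))
      rw [aux_norm ξ]).symm
  rw [h1]
  have key : (∫⁻ p : ℝ × ℝ, F p) ≤
      ENNReal.ofReal ((2 ^ ((1:ℝ)/2) * I0 + 2 * I0 + 2 ^ ((1:ℝ)/2) * Real.sqrt (2 * π) * cR + 1) *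
        (1 + lam) ^ (-(1 / 2) : ℝ)) := by
    rcases le_or_gt lam 1 with hcase | hcase
    · -- small lam : use trivial bound by I0
      have hb : (∫⁻ p : ℝ × ℝ, F p) ≤ ENNReal.ofReal I0 := by
        rw [← hW]
        refine lintegral_mono fun p => ?_
        rw [hFdef]
        refine ENNReal.ofReal_le_ofReal ?_
        have hexp1 : Real.exp (-(lam * p.1 ^ 2) / (p.1 ^ 2 + p.2 ^ 2)) ≤ 1 :=
          Real.exp_le_one_iff.mpr (by
            apply div_nonpos_of_nonpos_of_nonneg
            · nlinarith [sq_nonneg p.1]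
            · positivity)
        exact mul_le_of_le_one_left (rpow_nonneg (by positivity) _) hexp1
      refine hb.trans (ENNReal.ofReal_le_ofReal ?_)
      have h2 : (1 + lam) ^ ((1:ℝ)/2) ≤ 2 ^ ((1:ℝ)/2) :=
        rpow_le_rpow (by linarith) (by linarith) (by norm_num)
      have h3 : (1:ℝ) ≤ 2 ^ ((1:ℝ)/2) * (1 + lam) ^ (-(1 / 2) : ℝ) := by
        have h4 : (1 + lam) ^ ((1:ℝ)/2) * (1 + lam) ^ (-(1 / 2) : ℝ) = 1 := by
          rw [← rpow_add h1lam]; norm_num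
        calc (1:ℝ) = (1 + lam) ^ ((1:ℝ)/2) * (1 + lam) ^ (-(1 / 2) : ℝ) := h4.symm
          _ ≤ 2 ^ ((1:ℝ)/2) * (1 + lam) ^ (-(1 / 2) : ℝ) :=
            mul_le_mul_of_nonneg_right h2 hpowpos.le
      have h5 : I0 ≤ 2 ^ ((1:ℝ)/2) * I0 * (1 + lam) ^ (-(1 / 2) : ℝ) := by
        calc I0 = 1 * I0 := (one_mul I0).symm
          _ ≤ (2 ^ ((1:ℝ)/2) * (1 + lam) ^ (-(1 / 2) : ℝ)) * I0 :=
            mul_le_mul_of_nonneg_right h3 hI0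
          _ = 2 ^ ((1:ℝ)/2) * I0 * (1 + lam) ^ (-(1 / 2) : ℝ) := by ring
      refine h5.trans ?_
      apply mul_le_mul_of_nonneg_right _ hpowpos.le
      have hs2 := Real.sqrt_nonneg (2 * π)
      have h6 : (0:ℝ) ≤ 2 ^ ((1:ℝ)/2) := by positivity
      nlinarith [mul_nonneg (mul_nonneg h6 hs2) hcR]
    · -- lam > 1
      have hlam0 : (0:ℝ) < lam := by linarith
      set G1 : ℝ × ℝ → ENNReal := fun p =>
        ENNReal.ofReal (Real.exp (-(lam / 2)) * (1 + (p.1 ^ 2 + p.2 ^ 2)) ^ (-s)) with hG1def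
      set G2 : ℝ × ℝ → ENNReal := fun p =>
        ENNReal.ofReal (Real.exp (-(lam * p.1 ^ 2) / (2 * p.2 ^ 2)) * (1 + p.2 ^ 2) ^ (-s))
        with hG2def
      have hae : ∀ᵐ p : ℝ × ℝ, p.2 ≠ 0 := by
        rw [MeasureTheory.ae_iff]
        simpa using aux_null
      have hsplit : ∀ p : ℝ × ℝ, p.2 ≠ 0 → F p ≤ G1 p + G2 p := by
        intro p hp
        have hy2 : (0:ℝ) < p.2 ^ 2 := by positivity
        rcases le_or_gt (p.2 ^ 2) (p.1 ^ 2) with hxy | hxy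
        · have hx2 : (0:ℝ) < p.1 ^ 2 := lt_of_lt_of_le hy2 hxy
          have hexp : Real.exp (-(lam * p.1 ^ 2) / (p.1 ^ 2 + p.2 ^ 2)) ≤
              Real.exp (-(lam / 2)) := by
            apply Real.exp_le_exp.mpr
            rw [neg_div, neg_le_neg_iff, div_le_div_iff₀ two_pos (by positivity)]
            nlinarith [mul_le_mul_of_nonneg_left hxy hlam]
          refine le_trans ?_ le_self_add
          rw [hFdef, hG1def]
          exact ENNReal.ofReal_le_ofReal
            (mul_le_mul_of_nonneg_right hexp (rpow_nonneg (by positivity) _))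
        · have hexp : Real.exp (-(lam * p.1 ^ 2) / (p.1 ^ 2 + p.2 ^ 2)) ≤
              Real.exp (-(lam * p.1 ^ 2) / (2 * p.2 ^ 2)) := by
            apply Real.exp_le_exp.mpr
            rw [neg_div, neg_div, neg_le_neg_iff, div_le_div_iff₀ (by positivity) (by positivity)]
            nlinarith [mul_le_mul_of_nonneg_left hxy.le (mul_nonneg hlam0.le (sq_nonneg p.1))]
          have hwt : ((1:ℝ) + (p.1 ^ 2 + p.2 ^ 2)) ^ (-s) ≤ (1 + p.2 ^ 2) ^ (-s) :=
            rpow_le_rpow_of_nonpos (by positivity) (by nlinarith [sq_nonneg p.1])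
              (by linarith)
          refine le_trans ?_ le_add_self
          rw [hFdef, hG2def]
          exact ENNReal.ofReal_le_ofReal
            (mul_le_mul hexp hwt (rpow_nonneg (by positivity) _) (Real.exp_nonneg _))
      have hL : (∫⁻ p : ℝ × ℝ, F p) ≤ (∫⁻ p : ℝ × ℝ, G1 p) + (∫⁻ p : ℝ × ℝ, G2 p) := by
        rw [← lintegral_add_left (f := G1) (by rw [hG1def]; fun_prop) G2]
        exact lintegral_mono_ae (hae.mono fun p hp => hsplit p hp)
      have hG1 : (∫⁻ p : ℝ × ℝ, G1 p) = ENNReal.ofReal (Real.exp (-(lam / 2)) * I0) := by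
        simp_rw [hG1def, ENNReal.ofReal_mul (Real.exp_nonneg _)]
        rw [lintegral_const_mul _ (by fun_prop), hW,
          ← ENNReal.ofReal_mul (Real.exp_nonneg _)]
      have hG2 : (∫⁻ p : ℝ × ℝ, G2 p) ≤ ENNReal.ofReal (Real.sqrt (2 * π / lam) * cR) := by
        have hinner : ∀ᵐ y : ℝ, (∫⁻ x : ℝ, ENNReal.ofReal
            (Real.exp (-(lam * x ^ 2) / (2 * y ^ 2)) * (1 + y ^ 2) ^ (-s)))
            = ENNReal.ofReal (Real.sqrt (2 * π / lam)) *
              ENNReal.ofReal (|y| * (1 + y ^ 2) ^ (-s)) := by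
          have h0 : ∀ᵐ y : ℝ, y ≠ 0 := by
            rw [MeasureTheory.ae_iff]
            simpa using Real.volume_singleton
          refine h0.mono fun y hy => ?_
          have hy2 : (0:ℝ) < y ^ 2 := by positivity
          have hb : (0:ℝ) < lam / (2 * y ^ 2) := by positivity
          calc (∫⁻ x : ℝ, ENNReal.ofReal
              (Real.exp (-(lam * x ^ 2) / (2 * y ^ 2)) * (1 + y ^ 2) ^ (-s)))
              = ∫⁻ x : ℝ, ENNReal.ofReal (Real.exp (-(lam / (2 * y ^ 2)) * x ^ 2)) *
                  ENNReal.ofReal ((1 + y ^ 2) ^ (-s)) := by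
                refine lintegral_congr fun x => ?_
                rw [← ENNReal.ofReal_mul (Real.exp_nonneg _)]
                congr 2
                field_simp
            _ = (∫⁻ x : ℝ, ENNReal.ofReal (Real.exp (-(lam / (2 * y ^ 2)) * x ^ 2))) *
                  ENNReal.ofReal ((1 + y ^ 2) ^ (-s)) := lintegral_mul_const _ (by fun_prop)
            _ = ENNReal.ofReal (Real.sqrt (π / (lam / (2 * y ^ 2)))) *
                  ENNReal.ofReal ((1 + y ^ 2) ^ (-s)) := by
                rw [← ofReal_integral_eq_lintegral_ofReal (integrable_exp_neg_mul_sq hb)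
                  (Filter.Eventually.of_forall fun x => Real.exp_nonneg _), integral_gaussian]
            _ = ENNReal.ofReal (Real.sqrt (2 * π / lam)) *
                  ENNReal.ofReal (|y| * (1 + y ^ 2) ^ (-s)) := by
                have harg : π / (lam / (2 * y ^ 2)) = (2 * π / lam) * y ^ 2 := by
                  field_simp
                rw [harg, Real.sqrt_mul (by positivity), Real.sqrt_sq_eq_abs,
                  ENNReal.ofReal_mul (Real.sqrt_nonneg _),
                  ENNReal.ofReal_mul (abs_nonneg _), mul_assoc]
        have hmono : (∫⁻ y : ℝ, ENNReal.ofReal (|y| * (1 + y ^ 2) ^ (-s)))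
            ≤ ENNReal.ofReal cR := by
          have hpt : ∀ y : ℝ, |y| * (1 + y ^ 2) ^ (-s) ≤ (1 + y ^ 2) ^ (-(2 * s - 1) / 2) := by
            intro y
            have h1 : |y| ≤ (1 + y ^ 2) ^ ((1:ℝ)/2) := by
              rw [← Real.sqrt_eq_rpow]
              exact Real.abs_le_sqrt (by nlinarith)
            calc |y| * (1 + y ^ 2) ^ (-s)
                ≤ (1 + y ^ 2) ^ ((1:ℝ)/2) * (1 + y ^ 2) ^ (-s) :=
                  mul_le_mul_of_nonneg_right h1 (rpow_nonneg (by positivity) _)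
              _ = (1 + y ^ 2) ^ (-(2 * s - 1) / 2) := by
                  rw [← rpow_add (by positivity)]
                  congr 1
                  ring
          calc (∫⁻ y : ℝ, ENNReal.ofReal (|y| * (1 + y ^ 2) ^ (-s)))
              ≤ ∫⁻ y : ℝ, ENNReal.ofReal ((1 + y ^ 2) ^ (-(2 * s - 1) / 2)) :=
                lintegral_mono fun y => ENNReal.ofReal_le_ofReal (hpt y)
            _ = ENNReal.ofReal cR :=
                (ofReal_integral_eq_lintegral_ofReal hcRint
                  (Filter.Eventually.of_forall fun y => rpow_nonneg (by positivity) _)).symm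
        calc (∫⁻ p : ℝ × ℝ, G2 p)
            = ∫⁻ y : ℝ, ∫⁻ x : ℝ, ENNReal.ofReal
                (Real.exp (-(lam * x ^ 2) / (2 * y ^ 2)) * (1 + y ^ 2) ^ (-s)) := by
              rw [hG2def, Measure.volume_eq_prod, lintegral_prod_symm _ (by fun_prop)]
          _ = ∫⁻ y : ℝ, ENNReal.ofReal (Real.sqrt (2 * π / lam)) *
                ENNReal.ofReal (|y| * (1 + y ^ 2) ^ (-s)) := lintegral_congr_ae hinner
          _ = ENNReal.ofReal (Real.sqrt (2 * π / lam)) *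
                ∫⁻ y : ℝ, ENNReal.ofReal (|y| * (1 + y ^ 2) ^ (-s)) :=
              lintegral_const_mul _ (by fun_prop)
          _ ≤ ENNReal.ofReal (Real.sqrt (2 * π / lam)) * ENNReal.ofReal cR :=
              mul_le_mul_right hmono _
          _ = ENNReal.ofReal (Real.sqrt (2 * π / lam) * cR) :=
              (ENNReal.ofReal_mul (Real.sqrt_nonneg _)).symm
      -- combine
      have hexp2 : Real.exp (-(lam / 2)) ≤ 2 * (1 + lam) ^ (-(1 / 2) : ℝ) := by
        have h7 : Real.exp (-(lam / 2)) ≤ (1 + lam / 2)⁻¹ := by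
          rw [Real.exp_neg]
          exact inv_anti₀ (by linarith) (by linarith [Real.add_one_le_exp (lam / 2)])
        have h8 : (1 + lam / 2)⁻¹ ≤ 2 * (1 + lam)⁻¹ := by
          have h8' : (1:ℝ) / (1 + lam / 2) ≤ 2 / (1 + lam) := by
            rw [div_le_div_iff₀ (by linarith) h1lam]; linarith
          simpa [one_div, div_eq_mul_inv] using h8'
        have h9 : (1 + lam)⁻¹ ≤ (1 + lam) ^ (-(1 / 2) : ℝ) := by
          rw [← Real.rpow_neg_one]
          exact Real.rpow_le_rpow_of_exponent_le (by linarith) (by norm_num)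
        calc Real.exp (-(lam / 2)) ≤ (1 + lam / 2)⁻¹ := h7
          _ ≤ 2 * (1 + lam)⁻¹ := h8
          _ ≤ 2 * (1 + lam) ^ (-(1 / 2) : ℝ) := by linarith
      have hsqrt : Real.sqrt (2 * π / lam) ≤
          Real.sqrt (2 * π) * (2 ^ ((1:ℝ)/2) * (1 + lam) ^ (-(1 / 2) : ℝ)) := by
        have e1 : Real.sqrt (2 * π / lam) = Real.sqrt (2 * π) / Real.sqrt lam :=
          Real.sqrt_div (by positivity) _
        have e2 : (2:ℝ) ^ ((1:ℝ)/2) = Real.sqrt 2 := (Real.sqrt_eq_rpow 2).symm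
        have e3 : (1 + lam) ^ (-(1 / 2) : ℝ) = (Real.sqrt (1 + lam))⁻¹ := by
          rw [Real.rpow_neg h1lam.le, Real.sqrt_eq_rpow]
        rw [e1, e2, e3]
        have hsl : (0:ℝ) < Real.sqrt lam := Real.sqrt_pos.mpr hlam0
        have hsl1 : (0:ℝ) < Real.sqrt (1 + lam) := Real.sqrt_pos.mpr h1lam
        rw [div_le_iff₀ hsl]
        have key2 : Real.sqrt (1 + lam) ≤ Real.sqrt 2 * Real.sqrt lam := by
          rw [← Real.sqrt_mul (by norm_num)]
          exact Real.sqrt_le_sqrt (by linarith)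
        calc Real.sqrt (2 * π)
            = Real.sqrt (2 * π) * ((Real.sqrt (1 + lam))⁻¹ * Real.sqrt (1 + lam)) := by
              rw [inv_mul_cancel₀ hsl1.ne', mul_one]
          _ ≤ Real.sqrt (2 * π) * ((Real.sqrt (1 + lam))⁻¹ * (Real.sqrt 2 * Real.sqrt lam)) := by
              have := mul_le_mul_of_nonneg_left key2 (inv_nonneg.mpr hsl1.le)
              exact mul_le_mul_of_nonneg_left this (Real.sqrt_nonneg _)
          _ = Real.sqrt (2 * π) * (Real.sqrt 2 * (Real.sqrt (1 + lam))⁻¹) * Real.sqrt lam := by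
              ring
      refine hL.trans ?_
      rw [hG1]
      have ha : Real.exp (-(lam / 2)) * I0 ≤ 2 * (1 + lam) ^ (-(1 / 2) : ℝ) * I0 :=
        mul_le_mul_of_nonneg_right hexp2 hI0
      have hbnd : Real.sqrt (2 * π / lam) * cR ≤
          Real.sqrt (2 * π) * (2 ^ ((1:ℝ)/2) * (1 + lam) ^ (-(1 / 2) : ℝ)) * cR :=
        mul_le_mul_of_nonneg_right hsqrt hcR
      calc ENNReal.ofReal (Real.exp (-(lam / 2)) * I0) + (∫⁻ p : ℝ × ℝ, G2 p)
          ≤ ENNReal.ofReal (2 * (1 + lam) ^ (-(1 / 2) : ℝ) * I0) +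
            ENNReal.ofReal (Real.sqrt (2 * π) * (2 ^ ((1:ℝ)/2) *
              (1 + lam) ^ (-(1 / 2) : ℝ)) * cR) :=
            add_le_add (ENNReal.ofReal_le_ofReal ha)
              (hG2.trans (ENNReal.ofReal_le_ofReal hbnd))
        _ = ENNReal.ofReal (2 * (1 + lam) ^ (-(1 / 2) : ℝ) * I0 +
              Real.sqrt (2 * π) * (2 ^ ((1:ℝ)/2) * (1 + lam) ^ (-(1 / 2) : ℝ)) * cR) :=
            (ENNReal.ofReal_add (by positivity) (by positivity)).symm
        _ ≤ ENNReal.ofReal ((2 ^ ((1:ℝ)/2) * I0 + 2 * I0 +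
              2 ^ ((1:ℝ)/2) * Real.sqrt (2 * π) * cR + 1) * (1 + lam) ^ (-(1 / 2) : ℝ)) := by
            refine ENNReal.ofReal_le_ofReal ?_
            have e4 : (0:ℝ) ≤ 2 ^ ((1:ℝ)/2) * I0 * (1 + lam) ^ (-(1 / 2) : ℝ) := by positivity
            nlinarith [hpowpos.le]
  exact ENNReal.toReal_le_of_le_ofReal (by positivity) key

lemma aux_pow2 (n : ℕ) (a : ℝ) (ha : 0 ≤ a) : (1 + a) ^ n ≤ 2 ^ n * (1 + a ^ n) := by
  calc (1 + a) ^ n ≤ (2 * max 1 a) ^ n := by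
        apply pow_le_pow_left₀ (by positivity)
        rcases le_total a 1 with h | h
        · rw [max_eq_left h]; linarith
        · rw [max_eq_right h]; linarith
    _ = 2 ^ n * (max 1 a) ^ n := mul_pow _ _ _
    _ ≤ 2 ^ n * (1 + a ^ n) := by
        apply mul_le_mul_of_nonneg_left _ (by positivity)
        rcases le_total a 1 with h | h
        · rw [max_eq_left h, one_pow]; nlinarith [pow_nonneg ha n]
        · rw [max_eq_right h]; nlinarith [pow_nonneg ha n]

lemma aux_int_f (s : ℝ) (f : SchwartzMap (EuclideanSpace ℝ (Fin 2)) ℂ) :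
    Integrable (fun ξ : EuclideanSpace ℝ (Fin 2) => (1 + ‖ξ‖ ^ 2) ^ s * ‖f ξ‖ ^ 2) := by
  set n := ⌈s⌉₊ with hndef
  have hsn : s ≤ (n : ℝ) := Nat.le_ceil s
  set M := (SchwartzMap.seminorm ℝ 0 0) f with hMdef
  have hM : ∀ x, ‖f x‖ ≤ M := fun x => SchwartzMap.norm_le_seminorm ℝ f x
  have hM0 : (0:ℝ) ≤ M := (norm_nonneg _).trans (hM 0)
  have hint : Integrable (fun ξ : EuclideanSpace ℝ (Fin 2) =>
      M * 2 ^ n * (‖f ξ‖ + ‖ξ‖ ^ (2 * n) * ‖f ξ‖)) :=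
    ((f.integrable.norm.add (f.integrable_pow_mul volume (2 * n))).const_mul _)
  apply hint.mono'
  · apply Measurable.aestronglyMeasurable
    exact (by fun_prop : Measurable fun ξ : EuclideanSpace ℝ (Fin 2) =>
      ((1:ℝ) + ‖ξ‖ ^ 2) ^ s).mul (f.continuous.norm.measurable.pow_const 2)
  · refine Filter.Eventually.of_forall fun ξ => ?_
    have hx : (0:ℝ) ≤ ‖ξ‖ ^ 2 := sq_nonneg _
    have h1x : (1:ℝ) ≤ 1 + ‖ξ‖ ^ 2 := by linarith
    rw [Real.norm_eq_abs, abs_of_nonneg (by positivity)]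
    have step1 : ((1:ℝ) + ‖ξ‖ ^ 2) ^ s ≤ (1 + ‖ξ‖ ^ 2) ^ (n : ℕ) := by
      rw [← Real.rpow_natCast (1 + ‖ξ‖ ^ 2) n]
      exact Real.rpow_le_rpow_of_exponent_le h1x hsn
    have step2 : ‖f ξ‖ ^ 2 ≤ M * ‖f ξ‖ := by
      rw [sq]
      exact mul_le_mul_of_nonneg_right (hM ξ) (norm_nonneg _)
    have step3 : ((1:ℝ) + ‖ξ‖ ^ 2) ^ (n : ℕ) ≤ 2 ^ n * (1 + ‖ξ‖ ^ (2 * n)) := by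
      have := aux_pow2 n (‖ξ‖ ^ 2) hx
      rwa [← pow_mul, mul_comm (2:ℕ) n, pow_mul, ← pow_mul' ] at this
    calc ((1:ℝ) + ‖ξ‖ ^ 2) ^ s * ‖f ξ‖ ^ 2
        ≤ ((1:ℝ) + ‖ξ‖ ^ 2) ^ (n : ℕ) * ‖f ξ‖ ^ 2 :=
          mul_le_mul_of_nonneg_right step1 (sq_nonneg _)
      _ ≤ ((1:ℝ) + ‖ξ‖ ^ 2) ^ (n : ℕ) * (M * ‖f ξ‖) :=
          mul_le_mul_of_nonneg_left step2 (by positivity)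
      _ ≤ (2 ^ n * (1 + ‖ξ‖ ^ (2 * n))) * (M * ‖f ξ‖) :=
          mul_le_mul_of_nonneg_right step3 (by positivity)
      _ = M * 2 ^ n * (‖f ξ‖ + ‖ξ‖ ^ (2 * n) * ‖f ξ‖) := by ring

set_option maxHeartbeats 1000000 in
/-- Temporal decay of the linearized IPM propagator: for s > 1 there is C such that
∫ e^{−Nt ξ₁²/|ξ|²} |f(ξ)| dξ ≤ C (1+Nt)^{−1/4} ‖f‖_{H^s}. -/
theorem propagator_decay_estimate (s : ℝ) (hs : 1 < s) :
    ∃ C > 0, ∀ N t : ℝ, 0 < N → 0 ≤ t →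
      ∀ f : SchwartzMap (EuclideanSpace ℝ (Fin 2)) ℂ,
        (∫ ξ : EuclideanSpace ℝ (Fin 2),
            Real.exp (-(N * t * (ξ 0) ^ 2) / ‖ξ‖ ^ 2) * ‖f ξ‖) ≤
          C * (1 + N * t) ^ (-(1 / 4) : ℝ) *
            (∫ ξ : EuclideanSpace ℝ (Fin 2),
              (1 + ‖ξ‖ ^ 2) ^ s * ‖f ξ‖ ^ 2) ^ ((1 : ℝ) / 2) := by
  obtain ⟨C1, hC1pos, hC1⟩ := lemmaA s hs
  refine ⟨C1 ^ ((1:ℝ)/2), Real.rpow_pos_of_pos hC1pos _, ?_⟩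
  intro N t hN ht f
  set lam := N * t with hlamdef
  have hlam : 0 ≤ lam := mul_nonneg hN.le ht
  have h1lam : (0:ℝ) < 1 + lam := by linarith
  set u : EuclideanSpace ℝ (Fin 2) → ℝ := fun ξ =>
    Real.exp (-(lam * (ξ 0) ^ 2) / ‖ξ‖ ^ 2) * (1 + ‖ξ‖ ^ 2) ^ (-(s/2)) with hudef
  set v : EuclideanSpace ℝ (Fin 2) → ℝ := fun ξ =>
    (1 + ‖ξ‖ ^ 2) ^ (s/2) * ‖f ξ‖ with hvdef
  have humeas : Measurable u := by rw [hudef]; fun_prop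
  have hvmeas : Measurable v := by
    rw [hvdef]
    exact (by fun_prop : Measurable fun ξ : EuclideanSpace ℝ (Fin 2) =>
      ((1:ℝ) + ‖ξ‖ ^ 2) ^ (s/2)).mul f.continuous.norm.measurable
  have hunn : ∀ ξ, 0 ≤ u ξ := fun ξ =>
    mul_nonneg (Real.exp_nonneg _) (Real.rpow_nonneg (by positivity) _)
  have hvnn : ∀ ξ, 0 ≤ v ξ := fun ξ =>
    mul_nonneg (Real.rpow_nonneg (by positivity) _) (norm_nonneg _)
  -- squares
  have hu2eq : ∀ ξ : EuclideanSpace ℝ (Fin 2), u ξ ^ 2 =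
      Real.exp (-(2 * lam * (ξ 0) ^ 2) / ‖ξ‖ ^ 2) * (1 + ‖ξ‖ ^ 2) ^ (-s) := by
    intro ξ
    have hb : (0:ℝ) < 1 + ‖ξ‖ ^ 2 := by positivity
    rw [hudef]
    simp only
    rw [mul_pow, sq (Real.exp _), ← Real.exp_add]
    congr 1
    · congr 1
      ring
    · rw [← Real.rpow_natCast ((1 + ‖ξ‖ ^ 2) ^ (-(s/2))) 2, ← Real.rpow_mul hb.le]
      norm_num
  have hv2eq : ∀ ξ : EuclideanSpace ℝ (Fin 2), v ξ ^ 2 =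
      (1 + ‖ξ‖ ^ 2) ^ s * ‖f ξ‖ ^ 2 := by
    intro ξ
    have hb : (0:ℝ) < 1 + ‖ξ‖ ^ 2 := by positivity
    rw [hvdef]
    simp only
    rw [mul_pow]
    congr 1
    rw [← Real.rpow_natCast ((1 + ‖ξ‖ ^ 2) ^ (s/2)) 2, ← Real.rpow_mul hb.le]
    norm_num
  -- Memℒp
  have hu2int : Integrable (fun ξ => u ξ ^ 2) := by
    apply (aux_int_E2 hs).mono' ((humeas.pow_const 2).aestronglyMeasurable)
    refine Filter.Eventually.of_forall fun ξ => ?_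
    rw [Real.norm_eq_abs, abs_of_nonneg (sq_nonneg _), hu2eq ξ]
    have : Real.exp (-(2 * lam * (ξ 0) ^ 2) / ‖ξ‖ ^ 2) ≤ 1 :=
      Real.exp_le_one_iff.mpr (div_nonpos_of_nonpos_of_nonneg
        (neg_nonpos.mpr (by positivity)) (sq_nonneg _))
    exact mul_le_of_le_one_left (Real.rpow_nonneg (by positivity) _) this
  have hv2int : Integrable (fun ξ => v ξ ^ 2) := by
    apply (aux_int_f s f).congr
    exact Filter.Eventually.of_forall fun ξ => (hv2eq ξ).symm
  have hof2 : ENNReal.ofReal (2:ℝ) = 2 := by norm_num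
  have hu : MemLp u (ENNReal.ofReal (2:ℝ)) volume := by
    rw [hof2]
    exact (memLp_two_iff_integrable_sq humeas.aestronglyMeasurable).mpr hu2int
  have hv : MemLp v (ENNReal.ofReal (2:ℝ)) volume := by
    rw [hof2]
    exact (memLp_two_iff_integrable_sq hvmeas.aestronglyMeasurable).mpr hv2int
  have hconj : (2:ℝ).HolderConjugate 2 := Real.HolderConjugate.two_two
  have hHolder := integral_mul_le_Lp_mul_Lq_of_nonneg hconj
    (Filter.Eventually.of_forall hunn) (Filter.Eventually.of_forall hvnn) hu hv
  -- identify the LHS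
  have heq : (∫ ξ : EuclideanSpace ℝ (Fin 2),
      Real.exp (-(lam * (ξ 0) ^ 2) / ‖ξ‖ ^ 2) * ‖f ξ‖) = ∫ ξ, u ξ * v ξ := by
    refine integral_congr_ae (Filter.Eventually.of_forall fun ξ => ?_)
    have hb : (0:ℝ) < 1 + ‖ξ‖ ^ 2 := by positivity
    have h1 : ((1:ℝ) + ‖ξ‖ ^ 2) ^ (-(s/2)) * (1 + ‖ξ‖ ^ 2) ^ (s/2) = 1 := by
      rw [← Real.rpow_add hb]
      norm_num
    rw [hudef, hvdef]
    simp only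
    calc Real.exp (-(lam * (ξ 0) ^ 2) / ‖ξ‖ ^ 2) * ‖f ξ‖
        = Real.exp (-(lam * (ξ 0) ^ 2) / ‖ξ‖ ^ 2) * ‖f ξ‖ *
            (((1:ℝ) + ‖ξ‖ ^ 2) ^ (-(s/2)) * (1 + ‖ξ‖ ^ 2) ^ (s/2)) := by rw [h1, mul_one]
      _ = Real.exp (-(lam * (ξ 0) ^ 2) / ‖ξ‖ ^ 2) * (1 + ‖ξ‖ ^ 2) ^ (-(s/2)) *
            ((1 + ‖ξ‖ ^ 2) ^ (s/2) * ‖f ξ‖) := by ring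
  rw [heq]
  refine hHolder.trans ?_
  -- replace ∫ v^(2:ℝ) by the target integral
  have hv2eq' : (∫ ξ, v ξ ^ (2:ℝ)) = ∫ ξ : EuclideanSpace ℝ (Fin 2),
      (1 + ‖ξ‖ ^ 2) ^ s * ‖f ξ‖ ^ 2 := by
    refine integral_congr_ae (Filter.Eventually.of_forall fun ξ => ?_)
    show v ξ ^ (2:ℝ) = (1 + ‖ξ‖ ^ 2) ^ s * ‖f ξ‖ ^ 2
    have h2 : v ξ ^ (2:ℝ) = v ξ ^ (2:ℕ) := by
      rw [← Real.rpow_natCast (v ξ) 2]; norm_num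
    rw [h2, hv2eq ξ]
  have hu2eq' : (∫ ξ, u ξ ^ (2:ℝ)) = ∫ ξ : EuclideanSpace ℝ (Fin 2),
      Real.exp (-(2 * lam * (ξ 0) ^ 2) / ‖ξ‖ ^ 2) * (1 + ‖ξ‖ ^ 2) ^ (-s) := by
    refine integral_congr_ae (Filter.Eventually.of_forall fun ξ => ?_)
    show u ξ ^ (2:ℝ) = Real.exp (-(2 * lam * (ξ 0) ^ 2) / ‖ξ‖ ^ 2) * (1 + ‖ξ‖ ^ 2) ^ (-s)
    have h2 : u ξ ^ (2:ℝ) = u ξ ^ (2:ℕ) := by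
      rw [← Real.rpow_natCast (u ξ) 2]; norm_num
    rw [h2, hu2eq ξ]
  have hubound : (∫ ξ, u ξ ^ (2:ℝ)) ≤ C1 * (1 + lam) ^ (-(1 / 2) : ℝ) := by
    rw [hu2eq']
    refine (hC1 (2 * lam) (by linarith)).trans ?_
    apply mul_le_mul_of_nonneg_left _ hC1pos.le
    exact Real.rpow_le_rpow_of_nonpos h1lam (by linarith) (by norm_num)
  have hfac : (∫ ξ, u ξ ^ (2:ℝ)) ^ ((1:ℝ)/2) ≤ C1 ^ ((1:ℝ)/2) * (1 + lam) ^ (-(1 / 4) : ℝ) := by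
    have h0 : (0:ℝ) ≤ ∫ ξ, u ξ ^ (2:ℝ) :=
      integral_nonneg fun ξ => Real.rpow_nonneg (hunn ξ) _
    calc (∫ ξ, u ξ ^ (2:ℝ)) ^ ((1:ℝ)/2)
        ≤ (C1 * (1 + lam) ^ (-(1 / 2) : ℝ)) ^ ((1:ℝ)/2) :=
          Real.rpow_le_rpow h0 hubound (by norm_num)
      _ = C1 ^ ((1:ℝ)/2) * (1 + lam) ^ (-(1 / 4) : ℝ) := by
          rw [Real.mul_rpow hC1pos.le (Real.rpow_nonneg h1lam.le _),
            ← Real.rpow_mul h1lam.le]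
          norm_num
  rw [hv2eq']
  have hBnn : (0:ℝ) ≤ (∫ ξ : EuclideanSpace ℝ (Fin 2),
      (1 + ‖ξ‖ ^ 2) ^ s * ‖f ξ‖ ^ 2) ^ ((1:ℝ)/2) :=
    Real.rpow_nonneg (integral_nonneg fun ξ => by positivity) _
  calc (∫ ξ, u ξ ^ (2:ℝ)) ^ ((1:ℝ)/2) * (∫ ξ : EuclideanSpace ℝ (Fin 2),
      (1 + ‖ξ‖ ^ 2) ^ s * ‖f ξ‖ ^ 2) ^ ((1:ℝ)/2)
      ≤ (C1 ^ ((1:ℝ)/2) * (1 + lam) ^ (-(1 / 4) : ℝ)) * (∫ ξ : EuclideanSpace ℝ (Fin 2),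
        (1 + ‖ξ‖ ^ 2) ^ s * ‖f ξ‖ ^ 2) ^ ((1:ℝ)/2) :=
        mul_le_mul_of_nonneg_right hfac hBnn
    _ = C1 ^ ((1:ℝ)/2) * (1 + lam) ^ (-(1 / 4) : ℝ) * (∫ ξ : EuclideanSpace ℝ (Fin 2),
        (1 + ‖ξ‖ ^ 2) ^ s * ‖f ξ‖ ^ 2) ^ ((1:ℝ)/2) := by ring
end

section
/- Let s ≥ 1, j ∈ ℕ ∪ {0}, and ε > 0. Define g(ξ) = |ξ₁|^{−1/2+2ε} (1+|ξ|²)^{−s/2−1/4−2ε} on ℝ². Then there exists c > 0 such that for all N > 0 and t with Nt ≥ 1, ∫_{ℝ²} (|ξ₁|^j/|ξ|^j) e^{−N t ξ₁²/|ξ|²} g(ξ) dξ ≥ c (Nt)^{−(j/2 + 1/4 + ε)}. -/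
open MeasureTheory Real Set

lemma aux_meas (p r : ℝ) : Measurable (fun x : ℝ => |x| ^ p * (1 + x ^ 2) ^ r) := by
  measurability

lemma aux_integrable {p r : ℝ} (hp : -1 < p) (hpr : p + 2 * r < -1) (hr : r ≤ 0) :
    Integrable (fun x : ℝ => |x| ^ p * (1 + x ^ 2) ^ r) := by
  have hm := aux_meas p r
  have hIoi : IntegrableOn (fun x : ℝ => |x| ^ p * (1 + x ^ 2) ^ r) (Ioi 0) := by
    rw [← Ioo_union_Ici_eq_Ioi (zero_lt_one : (0:ℝ) < 1), integrableOn_union]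
    constructor
    · apply Integrable.mono' ((intervalIntegral.integrableOn_Ioo_rpow_iff one_pos).2 hp)
        hm.aestronglyMeasurable.restrict
      filter_upwards [ae_restrict_mem measurableSet_Ioo] with x hx
      have hx0 : 0 < x := hx.1
      have h1 : (1 + x ^ 2 : ℝ) ^ r ≤ 1 :=
        rpow_le_one_of_one_le_of_nonpos (by nlinarith) hr
      have h2 : (0:ℝ) ≤ |x| ^ p * (1 + x ^ 2) ^ r := by positivity
      rw [Real.norm_eq_abs, abs_of_nonneg h2, abs_of_pos hx0]
      calc x ^ p * (1 + x ^ 2) ^ r ≤ x ^ p * 1 := by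
            apply mul_le_mul_of_nonneg_left h1 (by positivity)
        _ = x ^ p := mul_one _
    · rw [integrableOn_Ici_iff_integrableOn_Ioi]
      apply Integrable.mono' (integrableOn_Ioi_rpow_of_lt hpr one_pos)
        hm.aestronglyMeasurable.restrict
      filter_upwards [ae_restrict_mem measurableSet_Ioi] with x hx
      have hx0 : (0:ℝ) < x := lt_trans one_pos hx
      have h2 : (0:ℝ) ≤ |x| ^ p * (1 + x ^ 2) ^ r := by positivity
      rw [Real.norm_eq_abs, abs_of_nonneg h2, abs_of_pos hx0]
      have h1 : (1 + x ^ 2 : ℝ) ^ r ≤ (x ^ 2 : ℝ) ^ r :=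
        rpow_le_rpow_of_nonpos (by positivity) (by nlinarith) hr
      calc x ^ p * (1 + x ^ 2) ^ r ≤ x ^ p * (x ^ 2) ^ r := by
            apply mul_le_mul_of_nonneg_left h1 (by positivity)
        _ = x ^ (p + 2 * r) := by
            rw [← rpow_natCast x 2, ← rpow_mul hx0.le, rpow_add hx0]
            norm_num
  rw [← integrableOn_univ, ← Iio_union_Ici (a := (0:ℝ)), integrableOn_union,
    integrableOn_Ici_iff_integrableOn_Ioi]
  refine ⟨?_, hIoi⟩
  rw [← (Measure.measurePreserving_neg (volume : Measure ℝ)).integrableOn_comp_preimage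
      (Homeomorph.neg ℝ).measurableEmbedding]
  simpa [Function.comp_def, neg_Iio] using hIoi

noncomputable def Taux : EuclideanSpace ℝ (Fin 2) ≃ᵐ ℝ × ℝ :=
  (MeasurableEquiv.toLp 2 (Fin 2 → ℝ)).symm.trans MeasurableEquiv.finTwoArrow

lemma hTaux : MeasurePreserving Taux volume volume :=
  (volume_preserving_finTwoArrow ℝ).comp
    (EuclideanSpace.volume_preserving_symm_measurableEquiv_toLp (Fin 2))

lemma Taux_symm_apply_zero (z : ℝ × ℝ) : (Taux.symm z) 0 = z.1 := rfl
lemma Taux_symm_apply_one (z : ℝ × ℝ) : (Taux.symm z) 1 = z.2 := rfl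

lemma Taux_symm_norm (z : ℝ × ℝ) : ‖Taux.symm z‖ = Real.sqrt (z.1 ^ 2 + z.2 ^ 2) := by
  rw [EuclideanSpace.norm_eq]
  simp only [Fin.sum_univ_two, Taux_symm_apply_zero, Taux_symm_apply_one,
    Real.norm_eq_abs, sq_abs]

noncomputable def Faux (l p q : ℝ) (j : ℕ) : ℝ × ℝ → ℝ := fun z =>
  (|z.1| ^ j / Real.sqrt (z.1 ^ 2 + z.2 ^ 2) ^ j) *
    Real.exp (-(l * z.1 ^ 2) / (z.1 ^ 2 + z.2 ^ 2)) *
    (|z.1| ^ p * (1 + (z.1 ^ 2 + z.2 ^ 2)) ^ q)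

lemma Faux_nonneg (l p q : ℝ) (j : ℕ) (z : ℝ × ℝ) : 0 ≤ Faux l p q j z := by
  have h : (0:ℝ) < 1 + (z.1 ^ 2 + z.2 ^ 2) := by positivity
  unfold Faux
  positivity

lemma Faux_meas (l p q : ℝ) (j : ℕ) : Measurable (Faux l p q j) := by
  unfold Faux
  have h1 : Measurable fun z : ℝ × ℝ => z.1 ^ 2 + z.2 ^ 2 :=
    (measurable_fst.pow_const 2).add (measurable_snd.pow_const 2)
  exact ((measurable_fst.abs.pow_const j).div ((h1.sqrt).pow_const j)).mul
    ((((measurable_fst.pow_const 2).const_mul l).neg.div h1).exp) |>.mul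
    ((measurable_fst.abs.pow measurable_const).mul
      ((measurable_const.add h1).pow measurable_const))

lemma Faux_integrable {l p r₁ r₂ : ℝ} (j : ℕ) (hl : 0 ≤ l) (hp : -1 < p)
    (hpr : p + 2 * r₁ < -1) (hr₁ : r₁ ≤ 0) (hr₂2 : 2 * r₂ < -1) (hr₂ : r₂ ≤ 0) :
    Integrable (Faux l p (r₁ + r₂) j) := by
  have hA := aux_integrable hp hpr hr₁
  have hB : Integrable (fun y : ℝ => (1 + y ^ 2) ^ r₂) := by
    simpa using aux_integrable (p := 0) (r := r₂) (by norm_num) (by linarith) hr₂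
  have hprod := hA.mul_prod hB
  apply Integrable.mono' hprod (Faux_meas l p (r₁ + r₂) j).aestronglyMeasurable
  filter_upwards with z
  rw [Real.norm_eq_abs, abs_of_nonneg (Faux_nonneg l p (r₁ + r₂) j z)]
  have hR0 : (0:ℝ) ≤ z.1 ^ 2 + z.2 ^ 2 := by positivity
  have hf1 : |z.1| ^ j / Real.sqrt (z.1 ^ 2 + z.2 ^ 2) ^ j ≤ 1 := by
    apply div_le_one_of_le₀
    · apply pow_le_pow_left₀ (abs_nonneg _) _ j
      rw [← Real.sqrt_sq_eq_abs]
      exact Real.sqrt_le_sqrt (by nlinarith [sq_nonneg z.2])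
    · positivity
  have hf2 : Real.exp (-(l * z.1 ^ 2) / (z.1 ^ 2 + z.2 ^ 2)) ≤ 1 := by
    rw [Real.exp_le_one_iff]
    apply div_nonpos_of_nonpos_of_nonneg _ hR0
    exact neg_nonpos.2 (by positivity)
  have hf4 : (1 + (z.1 ^ 2 + z.2 ^ 2)) ^ (r₁ + r₂) ≤ (1 + z.1 ^ 2) ^ r₁ * (1 + z.2 ^ 2) ^ r₂ := by
    rw [Real.rpow_add (by positivity)]
    apply mul_le_mul
    · exact rpow_le_rpow_of_nonpos (by positivity) (by nlinarith [sq_nonneg z.2]) hr₁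
    · exact rpow_le_rpow_of_nonpos (by positivity) (by nlinarith [sq_nonneg z.1]) hr₂
    · positivity
    · positivity
  calc Faux l p (r₁ + r₂) j z
      ≤ 1 * 1 * (|z.1| ^ p * ((1 + z.1 ^ 2) ^ r₁ * (1 + z.2 ^ 2) ^ r₂)) := by
        unfold Faux
        apply mul_le_mul
        · exact mul_le_mul hf1 hf2 (Real.exp_pos _).le zero_le_one
        · exact mul_le_mul_of_nonneg_left hf4 (by positivity)
        · have h : (0:ℝ) < 1 + (z.1 ^ 2 + z.2 ^ 2) := by positivity
          positivity
        · norm_num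
    _ = |z.1| ^ p * (1 + z.1 ^ 2) ^ r₁ * (1 + z.2 ^ 2) ^ r₂ := by ring

set_option maxHeartbeats 2000000 in
/-- Sharpness of the decay rates: lower bound for the linear propagator applied to the
explicit profile g(ξ) = |ξ₁|^{−1/2+2ε}(1+|ξ|²)^{−s/2−1/4−2ε}. -/
theorem propagator_sharp_lower_bound (s : ℝ) (hs : 1 ≤ s) (j : ℕ) (ε : ℝ) (hε : 0 < ε) :
    ∃ c > 0, ∀ N t : ℝ, 0 < N → 1 ≤ N * t →
      c * (N * t) ^ (-((j : ℝ) / 2 + 1 / 4 + ε)) ≤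
        ∫ ξ : EuclideanSpace ℝ (Fin 2),
          (|ξ 0| ^ j / ‖ξ‖ ^ j) * Real.exp (-(N * t * (ξ 0) ^ 2) / ‖ξ‖ ^ 2) *
            (|ξ 0| ^ (-(1 / 2 : ℝ) + 2 * ε) *
              (1 + ‖ξ‖ ^ 2) ^ (-(s / 2) - 1 / 4 - 2 * ε)) := by
  set p : ℝ := -(1 / 2 : ℝ) + 2 * ε with hpdef
  set q : ℝ := -(s / 2) - 1 / 4 - 2 * ε with hqdef
  set r₁ : ℝ := -(1 / 4 : ℝ) - (3 / 2) * ε with hr₁def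
  set r₂ : ℝ := -(s / 2) - ε / 2 with hr₂def
  have hqsum : q = r₁ + r₂ := by rw [hqdef, hr₁def, hr₂def]; ring
  have hp : -1 < p := by rw [hpdef]; linarith
  have hpr₁ : p + 2 * r₁ < -1 := by rw [hpdef, hr₁def]; linarith
  have hr₁0 : r₁ ≤ 0 := by rw [hr₁def]; linarith
  have hr₂2 : 2 * r₂ < -1 := by rw [hr₂def]; linarith
  have hr₂0 : r₂ ≤ 0 := by rw [hr₂def]; linarith
  have hq0 : q ≤ 0 := by rw [hqdef]; linarith
  have hmin0 : (0:ℝ) < min 1 ((2:ℝ) ^ (-p)) :=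
    lt_min one_pos (Real.rpow_pos_of_pos two_pos _)
  have h6q : (0:ℝ) < (6:ℝ) ^ q := Real.rpow_pos_of_pos (by norm_num) _
  have h6j : (0:ℝ) < (6:ℝ) ^ (-(j:ℝ)) := Real.rpow_pos_of_pos (by norm_num) _
  refine ⟨(6:ℝ) ^ (-(j:ℝ)) * Real.exp (-1) * min 1 ((2:ℝ) ^ (-p)) * (6:ℝ) ^ q / 2, by
    have := Real.exp_pos (-1 : ℝ); positivity, ?_⟩
  intro N t hN hNt
  set l : ℝ := N * t with hldef
  have hl0 : (0:ℝ) < l := lt_of_lt_of_le one_pos hNt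
  set a : ℝ := l ^ (-(1/2 : ℝ)) with hadef
  have ha0 : 0 < a := Real.rpow_pos_of_pos hl0 _
  have ha1 : a ≤ 1 := Real.rpow_le_one_of_one_le_of_nonpos hNt (by norm_num)
  have hla : l * a ^ 2 = 1 := by
    rw [hadef, ← Real.rpow_natCast (l ^ (-(1/2:ℝ))) 2, ← Real.rpow_mul hl0.le]
    norm_num
    rw [Real.rpow_neg_one, mul_inv_cancel₀ hl0.ne']
  -- coordinates transfer
  have htrans :
      (∫ ξ : EuclideanSpace ℝ (Fin 2),
          (|ξ 0| ^ j / ‖ξ‖ ^ j) * Real.exp (-(l * (ξ 0) ^ 2) / ‖ξ‖ ^ 2) *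
            (|ξ 0| ^ p * (1 + ‖ξ‖ ^ 2) ^ q)) = ∫ z : ℝ × ℝ, Faux l p q j z := by
    rw [← MeasurePreserving.integral_comp hTaux.symm Taux.symm.measurableEmbedding]
    apply congrArg
    funext z
    have hR0 : (0:ℝ) ≤ z.1 ^ 2 + z.2 ^ 2 := by positivity
    simp only [Taux_symm_apply_zero, Taux_symm_norm, Real.sq_sqrt hR0, Faux]
  have hFint : Integrable (Faux l p q j) := by
    rw [hqsum]
    exact Faux_integrable j hl0.le hp hpr₁ hr₁0 hr₂2 hr₂0
  -- the box
  set S : Set (ℝ × ℝ) := Icc (a/2) a ×ˢ Icc (1:ℝ) 2 with hSdef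
  have hSmeas : MeasurableSet S := measurableSet_Icc.prod measurableSet_Icc
  have hSvol : volume S = ENNReal.ofReal (a/2) := by
    rw [hSdef, MeasureTheory.Measure.volume_eq_prod, Measure.prod_prod, Real.volume_Icc, Real.volume_Icc]
    rw [show a - a/2 = a/2 by ring, show (2:ℝ) - 1 = 1 by norm_num, ENNReal.ofReal_one, mul_one]
  have hSne : volume S ≠ ⊤ := by rw [hSvol]; exact ENNReal.ofReal_ne_top
  -- pointwise lower bound on the box
  set L : ℝ := ((6:ℝ) ^ (-(j:ℝ)) * l ^ (-(j:ℝ)/2)) * Real.exp (-1) *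
      ((min 1 ((2:ℝ) ^ (-p)) * l ^ ((1:ℝ)/4 - ε)) * (6:ℝ) ^ q) with hLdef
  have haj : a ^ j = l ^ (-(j:ℝ)/2) := by
    rw [hadef, ← Real.rpow_natCast (l ^ (-(1/2:ℝ))) j, ← Real.rpow_mul hl0.le]
    congr 1; ring
  have hap : a ^ p = l ^ ((1:ℝ)/4 - ε) := by
    rw [hadef, ← Real.rpow_mul hl0.le]
    congr 1; rw [hpdef]; ring
  clear_value p q r₁ r₂ a l L
  have hbound : ∀ z ∈ S, L ≤ Faux l p q j z := by
    rintro z ⟨hx, hy⟩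
    have hx0 : 0 < z.1 := lt_of_lt_of_le (half_pos ha0) hx.1
    have hz1 : z.1 ≤ 1 := hx.2.trans ha1
    have hz2a : 1 ≤ z.2 ^ 2 := by nlinarith [hy.1]
    have hz2b : z.2 ^ 2 ≤ 4 := by nlinarith [hy.1, hy.2]
    have hz1b : z.1 ^ 2 ≤ 1 := by nlinarith [hx0.le]
    have hR1 : 1 ≤ z.1 ^ 2 + z.2 ^ 2 := by nlinarith [sq_nonneg z.1]
    have hR5 : z.1 ^ 2 + z.2 ^ 2 ≤ 5 := by linarith
    have hR0 : (0:ℝ) < z.1 ^ 2 + z.2 ^ 2 := by linarith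
    have hsq_pos : 0 < Real.sqrt (z.1 ^ 2 + z.2 ^ 2) := Real.sqrt_pos.2 hR0
    have hsq3 : Real.sqrt (z.1 ^ 2 + z.2 ^ 2) ≤ 3 := by
      rw [show (3:ℝ) = Real.sqrt 9 by
        rw [show (9:ℝ) = 3 ^ 2 by norm_num, Real.sqrt_sq (by norm_num)]]
      exact Real.sqrt_le_sqrt (by linarith)
    -- factor 1
    have h1 : (6:ℝ) ^ (-(j:ℝ)) * l ^ (-(j:ℝ)/2) ≤
        |z.1| ^ j / Real.sqrt (z.1 ^ 2 + z.2 ^ 2) ^ j := by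
      have e2 : (6:ℝ) ^ (-(j:ℝ)) * l ^ (-(j:ℝ)/2) = (a/6) ^ j := by
        rw [div_pow, haj, Real.rpow_neg (by norm_num : (0:ℝ) ≤ 6), Real.rpow_natCast]
        ring
      rw [abs_of_pos hx0, e2, ← div_pow]
      apply pow_le_pow_left₀ (by linarith)
      calc a / 6 = (a/2) / 3 := by ring
        _ ≤ z.1 / Real.sqrt (z.1 ^ 2 + z.2 ^ 2) := div_le_div₀ hx0.le hx.1 hsq_pos hsq3
    -- factor 2
    have h2 : Real.exp (-1) ≤ Real.exp (-(l * z.1 ^ 2) / (z.1 ^ 2 + z.2 ^ 2)) := by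
      rw [Real.exp_le_exp, neg_div, neg_le_neg_iff, div_le_one hR0]
      have hz1a : z.1 ^ 2 ≤ a ^ 2 := by nlinarith [hx.2, hx0.le]
      calc l * z.1 ^ 2 ≤ l * a ^ 2 := mul_le_mul_of_nonneg_left hz1a hl0.le
        _ = 1 := hla
        _ ≤ z.1 ^ 2 + z.2 ^ 2 := hR1
    -- factor 3
    have h3 : min 1 ((2:ℝ) ^ (-p)) * l ^ ((1:ℝ)/4 - ε) ≤ |z.1| ^ p := by
      rw [abs_of_pos hx0, ← hap]
      rcases le_or_gt 0 p with hp0 | hp0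
      · calc min 1 ((2:ℝ) ^ (-p)) * a ^ p ≤ (2:ℝ) ^ (-p) * a ^ p :=
              mul_le_mul_of_nonneg_right (min_le_right _ _) (Real.rpow_pos_of_pos ha0 p).le
          _ = (a/2) ^ p := by
              rw [Real.div_rpow ha0.le (by norm_num : (0:ℝ) ≤ 2),
                Real.rpow_neg (by norm_num : (0:ℝ) ≤ 2)]
              ring
          _ ≤ z.1 ^ p := Real.rpow_le_rpow (by linarith) hx.1 hp0
      · calc min 1 ((2:ℝ) ^ (-p)) * a ^ p ≤ 1 * a ^ p :=
              mul_le_mul_of_nonneg_right (min_le_left _ _) (Real.rpow_pos_of_pos ha0 p).le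
          _ = a ^ p := one_mul _
          _ ≤ z.1 ^ p := Real.rpow_le_rpow_of_nonpos hx0 hx.2 hp0.le
    -- factor 4
    have h4 : (6:ℝ) ^ q ≤ (1 + (z.1 ^ 2 + z.2 ^ 2)) ^ q :=
      Real.rpow_le_rpow_of_nonpos (by positivity) (by linarith) hq0
    have h12 : ((6:ℝ) ^ (-(j:ℝ)) * l ^ (-(j:ℝ)/2)) * Real.exp (-1) ≤
        (|z.1| ^ j / Real.sqrt (z.1 ^ 2 + z.2 ^ 2) ^ j) *
          Real.exp (-(l * z.1 ^ 2) / (z.1 ^ 2 + z.2 ^ 2)) :=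
      mul_le_mul h1 h2 (Real.exp_pos _).le (by positivity)
    have h34 : (min 1 ((2:ℝ) ^ (-p)) * l ^ ((1:ℝ)/4 - ε)) * (6:ℝ) ^ q ≤
        |z.1| ^ p * (1 + (z.1 ^ 2 + z.2 ^ 2)) ^ q :=
      mul_le_mul h3 h4 h6q.le (by positivity)
    calc L ≤ ((|z.1| ^ j / Real.sqrt (z.1 ^ 2 + z.2 ^ 2) ^ j) *
          Real.exp (-(l * z.1 ^ 2) / (z.1 ^ 2 + z.2 ^ 2))) *
          (|z.1| ^ p * (1 + (z.1 ^ 2 + z.2 ^ 2)) ^ q) := by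
          rw [hLdef]
          exact mul_le_mul h12 h34
            (mul_nonneg (mul_nonneg hmin0.le (Real.rpow_pos_of_pos hl0 _).le) h6q.le)
            (by positivity)
      _ = Faux l p q j z := rfl
  -- final chain
  have hpow : l ^ (-(j:ℝ)/2) * l ^ ((1:ℝ)/4 - ε) * a = l ^ (-((j:ℝ)/2 + 1/4 + ε)) := by
    rw [hadef, ← Real.rpow_add hl0, ← Real.rpow_add hl0]
    congr 1; ring
  have hkey : (6:ℝ) ^ (-(j:ℝ)) * Real.exp (-1) * min 1 ((2:ℝ) ^ (-p)) * (6:ℝ) ^ q / 2 *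
      l ^ (-((j:ℝ)/2 + 1/4 + ε)) = L * (a/2) := by
    rw [← hpow, hLdef]; ring
  calc (6:ℝ) ^ (-(j:ℝ)) * Real.exp (-1) * min 1 ((2:ℝ) ^ (-p)) * (6:ℝ) ^ q / 2 *
      l ^ (-((j:ℝ)/2 + 1/4 + ε)) = L * (volume S).toReal := by
        rw [hkey, hSvol, ENNReal.toReal_ofReal (by linarith)]
    _ ≤ ∫ z in S, Faux l p q j z :=
        setIntegral_ge_of_const_le_real hSmeas hSne hbound hFint.integrableOn
    _ ≤ ∫ z : ℝ × ℝ, Faux l p q j z :=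
        setIntegral_le_integral hFint (Filter.Eventually.of_forall (Faux_nonneg l p q j))
    _ = _ := htrans.symm
end
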